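/- Let x be the sum of (−1)^{v(T)} over spanning trees T of G containing e, and let y be the sum of (−1)^{v(T)} over spanning trees T of G not containing e. If |x + y| = |x| + |y|, then the absolute value of the sum of (−1)^{v(T')} over all spanning trees T' of G^n equals |x| + (n+1)·|y|. -/

import Mathlib

open Sum

/-- The set of spanning trees of a simple graph `H`: subgraphs (on the full
vertex set) that are trees. -/
def spanningTrees {X : Type*} (H : SimpleGraph X) : Set (SimpleGraph X) :=
  {T | T ≤ H ∧ T.IsTree}

/-- The number of positive edges of `T` with respect to the sign function `σ`. -/
noncomputable def posCount {X : Type*} (σ : Sym2 X → ℤ) (T : SimpleGraph X) : ℕ :=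
  {ed | ed ∈ T.edgeSet ∧ σ ed = 1}.ncard

/-- The graph `G^n`: delete the edge `{u, v}` and insert a path
`u — w₁ — ⋯ — wₙ — v` through `n` new vertices. -/
def subdiv {V : Type*} (G : SimpleGraph V) (u v : V) (n : ℕ) :
    SimpleGraph (V ⊕ Fin n) :=
  SimpleGraph.fromRel fun a b =>
    match a, b with
    | inl a, inl b => G.Adj a b ∧ s(a, b) ≠ s(u, v)
    | inl a, inr i => (a = u ∧ (i : ℕ) = 0) ∨ (a = v ∧ (i : ℕ) = n - 1)
    | inr i, inr j => (j : ℕ) = (i : ℕ) + 1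
    | inr _, inl _ => False

/-- The sign function on `G^n`: old edges keep their signs, and all
new (path) edges are positive. -/
noncomputable def subdivSign {V : Type*} {n : ℕ} (σ : Sym2 V → ℤ) :
    Sym2 (V ⊕ Fin n) → ℤ :=
  Sym2.lift ⟨fun a b =>
    match a, b with
    | inl a, inl b => σ s(a, b)
    | _, _ => (1 : ℤ),
    by rintro (a | i) (b | j) <;> simp only [] <;> rw [Sym2.eq_swap]⟩

section Aux
variable {X : Type*} {Y : Type*}

lemma aux_reachable_map {T : SimpleGraph X} {T₀ : SimpleGraph Y} (π : X → Y)
    (h : ∀ a b, T.Adj a b → T₀.Reachable (π a) (π b)) {w₁ w₂ : X} (hr : T.Reachable w₁ w₂) :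
    T₀.Reachable (π w₁) (π w₂) := by
  obtain ⟨p⟩ := hr
  induction p with
  | nil => exact .refl _
  | cons ha _ ih => exact (h _ _ ha).trans ih

lemma aux_invariant {T : SimpleGraph X} (P : X → Prop)
    (h : ∀ a b, T.Adj a b → (P a ↔ P b)) {w₁ w₂ : X} (hr : T.Reachable w₁ w₂)
    (h1 : P w₁) : P w₂ := by
  obtain ⟨p⟩ := hr
  induction p with
  | nil => exact h1
  | cons ha _ ih => exact ih ((h _ _ ha).1 h1)

lemma aux_ncard_edge_of_isTree [Fintype X] {T : SimpleGraph X} (h : T.IsTree) :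
    T.edgeSet.ncard + 1 = Fintype.card X := by
  classical
  haveI : Fintype T.edgeSet := Fintype.ofFinite _
  have := h.card_edgeFinset
  rwa [Set.ncard_eq_toFinset_card' T.edgeSet]

lemma aux_connected_delete {T : SimpleGraph X} (hc : T.Connected) {a b : X}
    (hr : (T \ SimpleGraph.fromEdgeSet {s(a, b)}).Reachable a b) :
    (T \ SimpleGraph.fromEdgeSet {s(a, b)}).Connected := by
  have hne : Nonempty X := hc.nonempty
  rw [SimpleGraph.connected_iff]
  refine ⟨fun w₁ w₂ => ?_, hne⟩
  refine aux_reachable_map (T := T) (T₀ := T \ SimpleGraph.fromEdgeSet {s(a, b)}) id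
    (fun c d hcd => ?_) (hc.preconnected w₁ w₂)
  by_cases hedge : s(c, d) = s(a, b)
  · rw [Sym2.eq_iff] at hedge
    rcases hedge with ⟨rfl, rfl⟩ | ⟨rfl, rfl⟩
    · exact hr
    · exact hr.symm
  · refine SimpleGraph.Adj.reachable ?_
    rw [SimpleGraph.sdiff_adj]
    exact ⟨hcd, fun hf => hedge ((SimpleGraph.fromEdgeSet_adj _).1 hf).1⟩

lemma aux_exists_cycle_edge {T : SimpleGraph X} (h : ¬ T.IsAcyclic) :
    ∃ a b : X, T.Adj a b ∧ (T \ SimpleGraph.fromEdgeSet {s(a, b)}).Reachable a b := by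
  classical
  simp only [SimpleGraph.IsAcyclic, not_forall, not_not] at h
  obtain ⟨v, c, hc⟩ := h
  have hne : c.edges ≠ [] := by
    intro hnil
    cases c with
    | nil => exact hc.ne_nil rfl
    | cons h p => simp at hnil
  obtain ⟨ed, hed⟩ := List.exists_mem_of_ne_nil _ hne
  induction ed using Sym2.ind with
  | _ a b =>
    have hadj : T.Adj a b := c.adj_of_mem_edges hed
    exact ⟨a, b, hadj,
      (SimpleGraph.adj_and_reachable_delete_edges_iff_exists_cycle.mpr ⟨v, c, hc, hed⟩).2⟩

lemma aux_edgeSet_delete {T : SimpleGraph X} {a b : X} :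
    (T \ SimpleGraph.fromEdgeSet {s(a, b)}).edgeSet = T.edgeSet \ {s(a, b)} := by
  ext ed
  induction ed using Sym2.ind with
  | _ c d =>
    simp only [SimpleGraph.mem_edgeSet, SimpleGraph.sdiff_adj, SimpleGraph.fromEdgeSet_adj,
      Set.mem_diff, Set.mem_singleton_iff, not_and, not_ne_iff]
    constructor
    · rintro ⟨h1, h2⟩
      exact ⟨h1, fun hf => h1.ne (h2 hf)⟩
    · rintro ⟨h1, h2⟩
      exact ⟨h1, fun hf => absurd hf h2⟩

lemma aux_card_le_of_connected [Fintype X] :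
    ∀ (N : ℕ) (T : SimpleGraph X), T.Connected → T.edgeSet.ncard ≤ N →
      Fintype.card X ≤ T.edgeSet.ncard + 1 := by
  intro N
  induction N with
  | zero =>
    intro T hc hcard
    by_cases ha : T.IsAcyclic
    · exact (aux_ncard_edge_of_isTree ⟨hc, ha⟩).ge
    · obtain ⟨a, b, hadj, -⟩ := aux_exists_cycle_edge ha
      have : s(a, b) ∈ T.edgeSet := hadj
      have h1 : 1 ≤ T.edgeSet.ncard := by
        rw [Nat.one_le_iff_ne_zero, Ne, Set.ncard_eq_zero (Set.toFinite _), ← Set.not_nonempty_iff_eq_empty, not_not]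
        exact ⟨_, this⟩
      omega
  | succ N ih =>
    intro T hc hcard
    by_cases ha : T.IsAcyclic
    · exact (aux_ncard_edge_of_isTree ⟨hc, ha⟩).ge
    · obtain ⟨a, b, hadj, hreach⟩ := aux_exists_cycle_edge ha
      have hc' := aux_connected_delete hc hreach
      have hcard' : (T \ SimpleGraph.fromEdgeSet {s(a, b)}).edgeSet.ncard
          = T.edgeSet.ncard - 1 := by
        rw [aux_edgeSet_delete, Set.ncard_diff_singleton_of_mem ((T.mem_edgeSet.mpr hadj))]
      have h1 : 1 ≤ T.edgeSet.ncard := by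
        rw [Nat.one_le_iff_ne_zero, Ne, Set.ncard_eq_zero (Set.toFinite _), ← Set.not_nonempty_iff_eq_empty, not_not]
        exact ⟨_, T.mem_edgeSet.mpr hadj⟩
      have := ih _ hc' (by omega)
      omega

lemma aux_isTree_of_connected_card [Fintype X] {T : SimpleGraph X} (hc : T.Connected)
    (hcard : T.edgeSet.ncard + 1 = Fintype.card X) : T.IsTree := by
  refine ⟨hc, ?_⟩
  by_contra ha
  obtain ⟨a, b, hadj, hreach⟩ := aux_exists_cycle_edge ha
  have hc' := aux_connected_delete hc hreach
  have hcard' : (T \ SimpleGraph.fromEdgeSet {s(a, b)}).edgeSet.ncard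
      = T.edgeSet.ncard - 1 := by
    rw [aux_edgeSet_delete, Set.ncard_diff_singleton_of_mem ((T.mem_edgeSet.mpr hadj))]
  have h1 : 1 ≤ T.edgeSet.ncard := by
    rw [Nat.one_le_iff_ne_zero, Ne, Set.ncard_eq_zero (Set.toFinite _), ← Set.not_nonempty_iff_eq_empty, not_not]
    exact ⟨_, T.mem_edgeSet.mpr hadj⟩
  have := aux_card_le_of_connected _ _ hc' le_rfl
  omega

end Aux

section Subdiv

variable {V : Type*}

/-- the `m`-th vertex along the subdivision path, `m ∈ [0, n+1]`. -/
def pvert (u v : V) (n : ℕ) (m : ℕ) : V ⊕ Fin n :=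
  if h : 1 ≤ m ∧ m ≤ n then inr ⟨m - 1, by omega⟩ else if m = 0 then inl u else inl v

/-- the `m`-th path edge, `m ∈ [0, n]`. -/
def pedge (u v : V) (n : ℕ) (m : ℕ) : Sym2 (V ⊕ Fin n) :=
  s(pvert u v n m, pvert u v n (m + 1))

/-- The graph on `V ⊕ Fin n` with inner part `T` (minus the edge `{u,v}`) and
path edges indexed by `K`. -/
def lifted (T : SimpleGraph V) (u v : V) (n : ℕ) (K : Set ℕ) : SimpleGraph (V ⊕ Fin n) :=
  SimpleGraph.fromRel fun a b =>
    match a, b with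
    | inl a, inl b => T.Adj a b ∧ s(a, b) ≠ s(u, v)
    | inl a, inr i => (a = u ∧ (i : ℕ) = 0 ∧ 0 ∈ K) ∨ (a = v ∧ (i : ℕ) = n - 1 ∧ n ∈ K)
    | inr i, inr j => (j : ℕ) = (i : ℕ) + 1 ∧ (j : ℕ) ∈ K
    | inr _, inl _ => False

variable {T : SimpleGraph V} {u v : V} {n : ℕ} {K : Set ℕ}

lemma subdiv_eq (G : SimpleGraph V) (u v : V) (n : ℕ) :
    subdiv G u v n = lifted G u v n Set.univ := by
  ext a b
  rcases a with a | i <;> rcases b with b | j <;>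
    simp [subdiv, lifted, SimpleGraph.fromRel_adj]

lemma lifted_adj_inl_inl {a b : V} :
    (lifted T u v n K).Adj (inl a) (inl b) ↔ T.Adj a b ∧ s(a, b) ≠ s(u, v) := by
  simp only [lifted, SimpleGraph.fromRel_adj, ne_eq, inl.injEq]
  constructor
  · rintro ⟨-, h | h⟩
    · exact h
    · exact ⟨h.1.symm, fun hf => h.2 (Sym2.eq_swap ▸ hf)⟩
  · intro h
    exact ⟨fun hf => h.1.ne hf, Or.inl h⟩

lemma lifted_adj_inl_inr {a : V} {i : Fin n} :
    (lifted T u v n K).Adj (inl a) (inr i) ↔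
      (a = u ∧ (i : ℕ) = 0 ∧ 0 ∈ K) ∨ (a = v ∧ (i : ℕ) = n - 1 ∧ n ∈ K) := by
  simp [lifted, SimpleGraph.fromRel_adj]

lemma lifted_adj_inr_inl {a : V} {i : Fin n} :
    (lifted T u v n K).Adj (inr i) (inl a) ↔
      (a = u ∧ (i : ℕ) = 0 ∧ 0 ∈ K) ∨ (a = v ∧ (i : ℕ) = n - 1 ∧ n ∈ K) := by
  rw [SimpleGraph.adj_comm]; exact lifted_adj_inl_inr

lemma lifted_adj_inr_inr {i j : Fin n} :
    (lifted T u v n K).Adj (inr i) (inr j) ↔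
      ((j : ℕ) = (i : ℕ) + 1 ∧ (j : ℕ) ∈ K) ∨ ((i : ℕ) = (j : ℕ) + 1 ∧ (i : ℕ) ∈ K) := by
  simp only [lifted, SimpleGraph.fromRel_adj, ne_eq, inr.injEq]
  constructor
  · rintro ⟨-, h⟩; exact h
  · intro h
    refine ⟨fun hf => ?_, h⟩
    subst hf
    rcases h with ⟨h, -⟩ | ⟨h, -⟩ <;> omega

lemma pvert_zero : pvert u v n 0 = inl u := by simp [pvert]

lemma pvert_mid {m : ℕ} (h1 : 1 ≤ m) (h2 : m ≤ n) :
    pvert u v n m = inr ⟨m - 1, by omega⟩ := by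
  rw [pvert, dif_pos ⟨h1, h2⟩]

lemma pvert_big {m : ℕ} (h : n + 1 ≤ m) : pvert u v n m = inl v := by
  rw [pvert, dif_neg (by omega), if_neg (by omega)]

lemma pvert_inj (hne : u ≠ v) {m m' : ℕ} (hm : m ≤ n + 1) (hm' : m' ≤ n + 1)
    (h : pvert u v n m = pvert u v n m') : m = m' := by
  by_cases h1 : 1 ≤ m ∧ m ≤ n <;> by_cases h2 : 1 ≤ m' ∧ m' ≤ n
  · rw [pvert_mid h1.1 h1.2, pvert_mid h2.1 h2.2] at h
    have := inr_injective h
    have := Fin.mk.injEq (m - 1) _ (m' - 1) _ ▸ this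
    omega
  · rcases Nat.lt_or_ge m' 1 with h3 | h3
    · interval_cases m'
      rw [pvert_mid h1.1 h1.2, pvert_zero] at h; exact absurd h (by simp)
    · have : m' = n + 1 := by omega
      subst this
      rw [pvert_mid h1.1 h1.2, pvert_big le_rfl] at h; exact absurd h (by simp)
  · rcases Nat.lt_or_ge m 1 with h3 | h3
    · interval_cases m
      rw [pvert_mid h2.1 h2.2, pvert_zero] at h; exact absurd h.symm (by simp)
    · have : m = n + 1 := by omega
      subst this
      rw [pvert_mid h2.1 h2.2, pvert_big le_rfl] at h; exact absurd h.symm (by simp)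
  · rcases Nat.lt_or_ge m 1 with h3 | h3 <;> rcases Nat.lt_or_ge m' 1 with h4 | h4
    · omega
    · interval_cases m
      have : m' = n + 1 := by omega
      subst this
      rw [pvert_zero, pvert_big le_rfl] at h
      exact absurd (inl_injective h) hne
    · interval_cases m'
      have : m = n + 1 := by omega
      subst this
      rw [pvert_zero, pvert_big le_rfl] at h
      exact absurd (inl_injective h.symm) hne
    · omega

lemma lifted_adj_pedge (hn : 1 ≤ n) {m : ℕ} (hm : m ≤ n) (hK : m ∈ K) :
    (lifted T u v n K).Adj (pvert u v n m) (pvert u v n (m + 1)) := by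
  rcases Nat.eq_zero_or_pos m with rfl | h1
  · rw [pvert_zero, pvert_mid le_rfl hn]
    exact lifted_adj_inl_inr.2 (Or.inl ⟨rfl, rfl, hK⟩)
  · rcases Nat.lt_or_ge m n with h2 | h2
    · rw [pvert_mid h1 hm, pvert_mid (by omega) (by omega)]
      exact lifted_adj_inr_inr.2 (Or.inl ⟨by simp; omega, by simpa using hK⟩)
    · have : m = n := by omega
      subst this
      rw [pvert_mid h1 le_rfl, pvert_big le_rfl]
      exact lifted_adj_inr_inl.2 (Or.inr ⟨rfl, rfl, hK⟩)


lemma pedge_ne_inl (hn : 1 ≤ n) {m : ℕ} (hm : m ≤ n) (a b : V) :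
    pedge u v n m ≠ s(inl a, inl b) := by
  intro h
  rcases Nat.eq_zero_or_pos m with rfl | h1
  · rw [pedge, pvert_mid le_rfl hn, Sym2.eq_iff] at h
    rcases h with ⟨-, h⟩ | ⟨-, h⟩ <;> simp at h
  · rw [pedge, pvert_mid h1 hm, Sym2.eq_iff] at h
    rcases h with ⟨h, -⟩ | ⟨h, -⟩ <;> simp at h

lemma pedge_eq_inl_inr (hn : 1 ≤ n) {m : ℕ} (hm : m ≤ n) {a : V} {i : Fin n} :
    pedge u v n m = s(inl a, inr i) ↔
      (m = 0 ∧ a = u ∧ (i : ℕ) = 0) ∨ (m = n ∧ a = v ∧ (i : ℕ) = n - 1) := by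
  rcases Nat.eq_zero_or_pos m with rfl | h1
  · rw [pedge, pvert_zero, pvert_mid le_rfl hn, Sym2.eq_iff]
    constructor
    · rintro (⟨h1, h2⟩ | ⟨h1, -⟩)
      · refine Or.inl ⟨rfl, (inl_injective h1).symm, ?_⟩
        have := congrArg (fun w => Fin.val w) (inr_injective h2)
        simpa using this.symm
      · simp at h1
    · rintro (⟨-, rfl, h2⟩ | ⟨h, -⟩)
      · exact Or.inl ⟨rfl, congrArg inr (Fin.ext (by simpa using h2.symm))⟩
      · exact absurd h (by omega)
  · rcases Nat.lt_or_ge m n with h2 | h2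
    · rw [pedge, pvert_mid h1 hm, pvert_mid (by omega) (by omega), Sym2.eq_iff]
      constructor
      · rintro (⟨h, -⟩ | ⟨-, h⟩) <;> simp at h
      · rintro (⟨h, -⟩ | ⟨h, -⟩) <;> exact absurd h (by omega)
    · have hmn : m = n := by omega
      subst hmn
      rw [pedge, pvert_mid h1 le_rfl, pvert_big le_rfl, Sym2.eq_iff]
      constructor
      · rintro (⟨h, -⟩ | ⟨h1', h2'⟩)
        · simp at h
        · refine Or.inr ⟨rfl, (inl_injective h2').symm, ?_⟩
          have := congrArg (fun w => Fin.val w) (inr_injective h1')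
          simpa using this.symm
      · rintro (⟨h, -⟩ | ⟨-, rfl, h2⟩)
        · exact absurd h (by omega)
        · exact Or.inr ⟨congrArg inr (Fin.ext (by simpa using h2.symm)), rfl⟩

lemma pedge_eq_inr_inr (hn : 1 ≤ n) {m : ℕ} (hm : m ≤ n) {i j : Fin n} :
    pedge u v n m = s(inr i, inr j) ↔
      (1 ≤ m ∧ m < n) ∧
        (((i : ℕ) = m - 1 ∧ (j : ℕ) = m) ∨ ((j : ℕ) = m - 1 ∧ (i : ℕ) = m)) := by
  rcases Nat.eq_zero_or_pos m with rfl | h1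
  · rw [pedge, pvert_zero, pvert_mid le_rfl hn, Sym2.eq_iff]
    constructor
    · rintro (⟨h, -⟩ | ⟨h, -⟩) <;> simp at h
    · rintro ⟨⟨h, -⟩, -⟩; omega
  · rcases Nat.lt_or_ge m n with h2 | h2
    · rw [pedge, pvert_mid h1 hm, pvert_mid (by omega) (by omega), Sym2.eq_iff]
      constructor
      · rintro (⟨ha, hb⟩ | ⟨ha, hb⟩)
        · have ha' := congrArg (fun w => Fin.val w) (inr_injective ha)
          have hb' := congrArg (fun w => Fin.val w) (inr_injective hb)
          simp only at ha' hb'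
          exact ⟨⟨h1, h2⟩, Or.inl ⟨ha'.symm, by omega⟩⟩
        · have ha' := congrArg (fun w => Fin.val w) (inr_injective ha)
          have hb' := congrArg (fun w => Fin.val w) (inr_injective hb)
          simp only at ha' hb'
          exact ⟨⟨h1, h2⟩, Or.inr ⟨ha'.symm, by omega⟩⟩
      · rintro ⟨-, (⟨ha, hb⟩ | ⟨ha, hb⟩)⟩
        · exact Or.inl ⟨congrArg inr (Fin.ext (by simp; omega)),
            congrArg inr (Fin.ext (by simp; omega))⟩
        · exact Or.inr ⟨congrArg inr (Fin.ext (by simp; omega)),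
            congrArg inr (Fin.ext (by simp; omega))⟩
    · have hmn : m = n := by omega
      subst hmn
      rw [pedge, pvert_mid h1 le_rfl, pvert_big le_rfl, Sym2.eq_iff]
      constructor
      · rintro (⟨-, h⟩ | ⟨-, h⟩) <;> simp at h
      · rintro ⟨⟨-, h⟩, -⟩; omega

lemma lifted_edgeSet (hn : 1 ≤ n) :
    (lifted T u v n K).edgeSet =
      (Sym2.map inl '' (T.edgeSet \ {s(u, v)})) ∪ (pedge u v n '' (K ∩ Set.Iic n)) := by
  ext ed
  induction ed using Sym2.ind with
  | _ w₁ w₂ =>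
  rcases w₁ with a | i <;> rcases w₂ with b | j
  · simp only [SimpleGraph.mem_edgeSet, lifted_adj_inl_inl, Set.mem_union, Set.mem_image]
    constructor
    · rintro ⟨h1, h2⟩
      exact Or.inl ⟨s(a, b), ⟨h1, h2⟩, Sym2.map_pair_eq inl a b⟩
    · rintro (⟨ed', ⟨h1, h2⟩, heq⟩ | ⟨m, ⟨hK, hm⟩, heq⟩)
      · have : ed' = s(a, b) := Sym2.map.injective inl_injective
          (by rw [heq, Sym2.map_pair_eq])
        subst this
        exact ⟨h1, h2⟩
      · exact absurd heq (pedge_ne_inl hn hm a b)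
  · simp only [SimpleGraph.mem_edgeSet, lifted_adj_inl_inr, Set.mem_union, Set.mem_image]
    constructor
    · rintro (⟨rfl, hi, hK⟩ | ⟨rfl, hi, hK⟩)
      · exact Or.inr ⟨0, ⟨hK, by simp⟩,
          (pedge_eq_inl_inr hn (by omega)).2 (Or.inl ⟨rfl, rfl, hi⟩)⟩
      · exact Or.inr ⟨n, ⟨hK, Set.mem_Iic.2 le_rfl⟩,
          (pedge_eq_inl_inr hn le_rfl).2 (Or.inr ⟨rfl, rfl, hi⟩)⟩
    · rintro (⟨ed', -, heq⟩ | ⟨m, ⟨hK, hm⟩, heq⟩)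
      · exfalso
        induction ed' using Sym2.ind with
        | _ c d =>
          rw [Sym2.map_pair_eq, Sym2.eq_iff] at heq
          rcases heq with ⟨-, h⟩ | ⟨h, -⟩ <;> simp at h
      · rw [pedge_eq_inl_inr hn hm] at heq
        rcases heq with ⟨rfl, rfl, h⟩ | ⟨rfl, rfl, h⟩
        · exact Or.inl ⟨rfl, h, hK⟩
        · exact Or.inr ⟨rfl, h, hK⟩
  · rw [Sym2.eq_swap]
    simp only [SimpleGraph.mem_edgeSet, lifted_adj_inl_inr, Set.mem_union, Set.mem_image]
    constructor
    · rintro (⟨rfl, hi, hK⟩ | ⟨rfl, hi, hK⟩)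
      · exact Or.inr ⟨0, ⟨hK, by simp⟩,
          (pedge_eq_inl_inr hn (by omega)).2 (Or.inl ⟨rfl, rfl, hi⟩)⟩
      · exact Or.inr ⟨n, ⟨hK, Set.mem_Iic.2 le_rfl⟩,
          (pedge_eq_inl_inr hn le_rfl).2 (Or.inr ⟨rfl, rfl, hi⟩)⟩
    · rintro (⟨ed', -, heq⟩ | ⟨m, ⟨hK, hm⟩, heq⟩)
      · exfalso
        induction ed' using Sym2.ind with
        | _ c d =>
          rw [Sym2.map_pair_eq, Sym2.eq_iff] at heq
          rcases heq with ⟨-, h⟩ | ⟨h, -⟩ <;> simp at h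
      · rw [pedge_eq_inl_inr hn hm] at heq
        rcases heq with ⟨rfl, rfl, h⟩ | ⟨rfl, rfl, h⟩
        · exact Or.inl ⟨rfl, h, hK⟩
        · exact Or.inr ⟨rfl, h, hK⟩
  · simp only [SimpleGraph.mem_edgeSet, lifted_adj_inr_inr, Set.mem_union, Set.mem_image]
    constructor
    · rintro (⟨hj, hK⟩ | ⟨hi, hK⟩)
      · refine Or.inr ⟨(j : ℕ), ⟨hK, Set.mem_Iic.2 j.isLt.le⟩,
          (pedge_eq_inr_inr hn j.isLt.le).2 ⟨⟨by omega, j.isLt⟩, Or.inl ⟨by omega, rfl⟩⟩⟩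
      · refine Or.inr ⟨(i : ℕ), ⟨hK, Set.mem_Iic.2 i.isLt.le⟩,
          (pedge_eq_inr_inr hn i.isLt.le).2 ⟨⟨by omega, i.isLt⟩, Or.inr ⟨by omega, rfl⟩⟩⟩
    · rintro (⟨ed', -, heq⟩ | ⟨m, ⟨hK, hm⟩, heq⟩)
      · exfalso
        induction ed' using Sym2.ind with
        | _ c d =>
          rw [Sym2.map_pair_eq, Sym2.eq_iff] at heq
          rcases heq with ⟨h, -⟩ | ⟨h, -⟩ <;> simp at h
      · rw [pedge_eq_inr_inr hn hm] at heq
        rcases heq with ⟨⟨h1, h2⟩, (⟨ha, hb⟩ | ⟨ha, hb⟩)⟩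
        · exact Or.inl ⟨by omega, hb ▸ hK⟩
        · exact Or.inr ⟨by omega, hb ▸ hK⟩

lemma pedge_injOn (hne : u ≠ v) : Set.InjOn (pedge u v n) (Set.Iic n) := by
  intro m hm m' hm' h
  rw [Set.mem_Iic] at hm hm'
  rw [pedge, pedge, Sym2.eq_iff] at h
  rcases h with ⟨h1, -⟩ | ⟨h1, h2⟩
  · exact pvert_inj hne (by omega) (by omega) h1
  · have := pvert_inj hne (by omega) (by omega) h1
    have := pvert_inj hne (by omega) (by omega) h2
    omega

lemma sym2_map_inl_inj : Function.Injective (Sym2.map (inl : V → V ⊕ Fin n)) :=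
  Sym2.map.injective inl_injective

lemma disjoint_inl_pedge (hn : 1 ≤ n) (S : Set (Sym2 V)) (K' : Set ℕ) :
    Disjoint (Sym2.map inl '' S) (pedge u v n '' (K' ∩ Set.Iic n)) := by
  rw [Set.disjoint_left]
  rintro ed ⟨ed', -, rfl⟩ ⟨m, ⟨-, hm⟩, heq⟩
  induction ed' using Sym2.ind with
  | _ a b =>
    rw [Sym2.map_pair_eq] at heq
    exact pedge_ne_inl hn (Set.mem_Iic.1 hm) a b heq

lemma lifted_ncard [Fintype V] (hn : 1 ≤ n) (hne : u ≠ v) :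
    (lifted T u v n K).edgeSet.ncard
      = (T.edgeSet \ {s(u, v)}).ncard + (K ∩ Set.Iic n).ncard := by
  rw [lifted_edgeSet hn,
    Set.ncard_union_eq (disjoint_inl_pedge hn _ _)
      (Set.Finite.image _ (Set.toFinite _))
      (Set.Finite.image _ ((Set.finite_Iic n).inter_of_right K)),
    Set.ncard_image_of_injective _ sym2_map_inl_inj,
    Set.ncard_image_of_injOn (pedge_injOn hne |>.mono Set.inter_subset_right)]

lemma pedge_mem_lifted_iff (hn : 1 ≤ n) (hne : u ≠ v) {m : ℕ} (hm : m ≤ n) :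
    pedge u v n m ∈ (lifted T u v n K).edgeSet ↔ m ∈ K := by
  constructor
  · intro h
    rw [lifted_edgeSet hn] at h
    rcases h with ⟨ed', -, heq⟩ | ⟨m', ⟨hK, hm'⟩, heq⟩
    · exfalso
      induction ed' using Sym2.ind with
      | _ a b =>
        rw [Sym2.map_pair_eq] at heq
        exact pedge_ne_inl hn hm a b heq.symm
    · rwa [pedge_injOn hne hm' (Set.mem_Iic.2 hm) heq] at hK
  · intro h
    rw [pedge, SimpleGraph.mem_edgeSet]
    exact lifted_adj_pedge hn hm h

lemma sign_map (σ : Sym2 V → ℤ) (ed : Sym2 V) :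
    subdivSign (n := n) σ (Sym2.map inl ed) = σ ed := by
  induction ed using Sym2.ind with
  | _ a b => rw [Sym2.map_pair_eq]; rfl

lemma sign_pedge (σ : Sym2 V → ℤ) (hn : 1 ≤ n) {m : ℕ} (hm : m ≤ n) :
    subdivSign σ (pedge u v n m) = 1 := by
  rcases Nat.eq_zero_or_pos m with rfl | h1
  · rw [pedge, pvert_zero, pvert_mid le_rfl hn]; rfl
  · rcases Nat.lt_or_ge m n with h2 | h2
    · rw [pedge, pvert_mid h1 hm, pvert_mid (by omega) (by omega)]; rfl
    · have : m = n := by omega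
      subst this
      rw [pedge, pvert_mid h1 le_rfl, pvert_big le_rfl]; rfl

lemma posCount_lifted [Fintype V] (hn : 1 ≤ n) (hne : u ≠ v) (σ : Sym2 V → ℤ) :
    posCount (subdivSign σ) (lifted T u v n K)
      = {ed | ed ∈ T.edgeSet \ {s(u, v)} ∧ σ ed = 1}.ncard + (K ∩ Set.Iic n).ncard := by
  have hset : {ed | ed ∈ (lifted T u v n K).edgeSet ∧ subdivSign σ ed = 1}
      = (Sym2.map inl '' {ed | ed ∈ T.edgeSet \ {s(u, v)} ∧ σ ed = 1})
        ∪ (pedge u v n '' (K ∩ Set.Iic n)) := by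
    ext ed
    simp only [Set.mem_setOf_eq, lifted_edgeSet hn, Set.mem_union, Set.mem_image]
    constructor
    · rintro ⟨⟨ed', hed', rfl⟩ | ⟨m, hm, rfl⟩, hsign⟩
      · exact Or.inl ⟨ed', ⟨hed', by rwa [sign_map] at hsign⟩, rfl⟩
      · exact Or.inr ⟨m, hm, rfl⟩
    · rintro (⟨ed', ⟨h1, h2⟩, rfl⟩ | ⟨m, hm, rfl⟩)
      · exact ⟨Or.inl ⟨ed', h1, rfl⟩, by rw [sign_map]; exact h2⟩
      · exact ⟨Or.inr ⟨m, hm, rfl⟩, sign_pedge σ hn (Set.mem_Iic.1 hm.2)⟩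
  rw [posCount, hset,
    Set.ncard_union_eq (disjoint_inl_pedge hn _ _)
      (Set.Finite.image _ (Set.toFinite _))
      (Set.Finite.image _ ((Set.finite_Iic n).inter_of_right K)),
    Set.ncard_image_of_injective _ sym2_map_inl_inj,
    Set.ncard_image_of_injOn (pedge_injOn hne |>.mono Set.inter_subset_right)]

lemma lifted_mono {T T' : SimpleGraph V} {K K' : Set ℕ} (hT : T ≤ T')
    (hK : ∀ m, m ≤ n → m ∈ K → m ∈ K') :
    lifted T u v n K ≤ lifted T' u v n K' := by
  intro a b hadj
  rcases a with a | i <;> rcases b with b | j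
  · rw [lifted_adj_inl_inl] at hadj ⊢
    exact ⟨hT hadj.1, hadj.2⟩
  · rw [lifted_adj_inl_inr] at hadj ⊢
    rcases hadj with ⟨h1, h2, h3⟩ | ⟨h1, h2, h3⟩
    · exact Or.inl ⟨h1, h2, hK 0 (by omega) h3⟩
    · exact Or.inr ⟨h1, h2, hK n le_rfl h3⟩
  · rw [lifted_adj_inr_inl] at hadj ⊢
    rcases hadj with ⟨h1, h2, h3⟩ | ⟨h1, h2, h3⟩
    · exact Or.inl ⟨h1, h2, hK 0 (by omega) h3⟩
    · exact Or.inr ⟨h1, h2, hK n le_rfl h3⟩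
  · rw [lifted_adj_inr_inr] at hadj ⊢
    rcases hadj with ⟨h1, h2⟩ | ⟨h1, h2⟩
    · exact Or.inl ⟨h1, hK _ j.isLt.le h2⟩
    · exact Or.inr ⟨h1, hK _ i.isLt.le h2⟩

lemma lifted_congr {T₁ T₂ : SimpleGraph V} {K₁ K₂ : Set ℕ}
    (hT : ∀ a b, (T₁.Adj a b ∧ s(a, b) ≠ s(u, v)) ↔ (T₂.Adj a b ∧ s(a, b) ≠ s(u, v)))
    (hK : ∀ m, m ≤ n → (m ∈ K₁ ↔ m ∈ K₂)) :
    lifted T₁ u v n K₁ = lifted T₂ u v n K₂ := by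
  have h1 : ∀ a b, T₁.Adj a b ∧ s(a, b) ≠ s(u, v) → T₂.Adj a b := fun a b h => ((hT a b).1 h).1
  have h2 : ∀ a b, T₂.Adj a b ∧ s(a, b) ≠ s(u, v) → T₁.Adj a b := fun a b h => ((hT a b).2 h).1
  apply le_antisymm
  · intro a b hadj
    rcases a with a | i <;> rcases b with b | j
    · rw [lifted_adj_inl_inl] at hadj ⊢
      exact ⟨h1 _ _ hadj, hadj.2⟩
    · rw [lifted_adj_inl_inr] at hadj ⊢
      rcases hadj with ⟨x1, x2, x3⟩ | ⟨x1, x2, x3⟩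
      · exact Or.inl ⟨x1, x2, (hK 0 (by omega)).1 x3⟩
      · exact Or.inr ⟨x1, x2, (hK n le_rfl).1 x3⟩
    · rw [lifted_adj_inr_inl] at hadj ⊢
      rcases hadj with ⟨x1, x2, x3⟩ | ⟨x1, x2, x3⟩
      · exact Or.inl ⟨x1, x2, (hK 0 (by omega)).1 x3⟩
      · exact Or.inr ⟨x1, x2, (hK n le_rfl).1 x3⟩
    · rw [lifted_adj_inr_inr] at hadj ⊢
      rcases hadj with ⟨x1, x2⟩ | ⟨x1, x2⟩
      · exact Or.inl ⟨x1, (hK _ j.isLt.le).1 x2⟩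
      · exact Or.inr ⟨x1, (hK _ i.isLt.le).1 x2⟩
  · intro a b hadj
    rcases a with a | i <;> rcases b with b | j
    · rw [lifted_adj_inl_inl] at hadj ⊢
      exact ⟨h2 _ _ hadj, hadj.2⟩
    · rw [lifted_adj_inl_inr] at hadj ⊢
      rcases hadj with ⟨x1, x2, x3⟩ | ⟨x1, x2, x3⟩
      · exact Or.inl ⟨x1, x2, (hK 0 (by omega)).2 x3⟩
      · exact Or.inr ⟨x1, x2, (hK n le_rfl).2 x3⟩
    · rw [lifted_adj_inr_inl] at hadj ⊢
      rcases hadj with ⟨x1, x2, x3⟩ | ⟨x1, x2, x3⟩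
      · exact Or.inl ⟨x1, x2, (hK 0 (by omega)).2 x3⟩
      · exact Or.inr ⟨x1, x2, (hK n le_rfl).2 x3⟩
    · rw [lifted_adj_inr_inr] at hadj ⊢
      rcases hadj with ⟨x1, x2⟩ | ⟨x1, x2⟩
      · exact Or.inl ⟨x1, (hK _ j.isLt.le).2 x2⟩
      · exact Or.inr ⟨x1, (hK _ i.isLt.le).2 x2⟩

lemma reach_pvert_up (hn : 1 ≤ n) {m : ℕ} (hm : m ≤ n + 1)
    (hK : ∀ j, j < m → j ∈ K) :
    (lifted T u v n K).Reachable (inl u) (pvert u v n m) := by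
  induction m with
  | zero => rw [pvert_zero]
  | succ p ih =>
    exact (ih (by omega) (fun j hj => hK j (by omega))).trans
      (lifted_adj_pedge hn (by omega) (hK p (by omega))).reachable

lemma reach_pvert_down (hn : 1 ≤ n) {m : ℕ} (hm : m ≤ n + 1)
    (hK : ∀ j, m ≤ j → j ≤ n → j ∈ K) :
    (lifted T u v n K).Reachable (pvert u v n m) (inl v) := by
  obtain ⟨d, hd⟩ : ∃ d, d = n + 1 - m := ⟨_, rfl⟩
  induction d generalizing m with
  | zero =>
    have : m = n + 1 := by omega
    subst this
    rw [pvert_big le_rfl]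
  | succ p ih =>
    have hmn : m ≤ n := by omega
    exact (lifted_adj_pedge hn hmn (hK m le_rfl hmn)).reachable.trans
      (ih (by omega) (fun j h1 h2 => hK j (by omega) h2) (by omega))

lemma lifted_connected_aux (hn : 1 ≤ n) (hT : T.Connected)
    (hpath : ∀ a b, T.Adj a b → (lifted T u v n K).Reachable (inl a) (inl b))
    (hinr : ∀ i : Fin n, (lifted T u v n K).Reachable (inl u) (inr i)) :
    (lifted T u v n K).Connected := by
  rw [SimpleGraph.connected_iff]
  refine ⟨?_, ⟨inl u⟩⟩
  have key : ∀ w, (lifted T u v n K).Reachable (inl u) w := by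
    rintro (a | i)
    · exact aux_reachable_map inl hpath (hT.preconnected u a)
    · exact hinr i
  exact fun w₁ w₂ => (key w₁).symm.trans (key w₂)

lemma lifted_connected_full (hn : 1 ≤ n) (hT : T.Connected) :
    (lifted T u v n (Set.univ : Set ℕ)).Connected := by
  have huv : (lifted T u v n (Set.univ : Set ℕ)).Reachable (inl u) (inl v) := by
    have := reach_pvert_up (T := T) (u := u) (v := v) hn (le_refl (n + 1))
      (fun j _ => Set.mem_univ j)
    rwa [pvert_big le_rfl] at this
  refine lifted_connected_aux hn hT (fun a b hadj => ?_) (fun i => ?_)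
  · by_cases hs : s(a, b) = s(u, v)
    · rw [Sym2.eq_iff] at hs
      rcases hs with ⟨rfl, rfl⟩ | ⟨rfl, rfl⟩
      · exact huv
      · exact huv.symm
    · exact (lifted_adj_inl_inl.2 ⟨hadj, hs⟩).reachable
  · have := reach_pvert_up (T := T) (u := u) (v := v) hn
      (m := (i : ℕ) + 1) (by omega) (fun j _ => Set.mem_univ j)
    rwa [pvert_mid (by omega) (by omega), show (⟨(i : ℕ) + 1 - 1, by omega⟩ : Fin n) = i
      from Fin.ext (by simp)] at this

lemma lifted_connected_missing (hn : 1 ≤ n) (hT : T.Connected)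
    (hTe : s(u, v) ∉ T.edgeSet) {k : ℕ} (hk : k ≤ n) :
    (lifted T u v n {m | m ≠ k}).Connected := by
  have hvu : (lifted T u v n {m | m ≠ k}).Reachable (inl v) (inl u) := by
    refine aux_reachable_map inl (fun a b hadj => ?_) (hT.preconnected v u)
    have hs : s(a, b) ≠ s(u, v) := by
      intro hf
      exact hTe (hf ▸ T.mem_edgeSet.2 hadj)
    exact (lifted_adj_inl_inl.2 ⟨hadj, hs⟩).reachable
  refine lifted_connected_aux hn hT (fun a b hadj => ?_) (fun i => ?_)
  · have hs : s(a, b) ≠ s(u, v) := by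
      intro hf
      exact hTe (hf ▸ T.mem_edgeSet.2 hadj)
    exact (lifted_adj_inl_inl.2 ⟨hadj, hs⟩).reachable
  · have hi : inr i = pvert u v n ((i : ℕ) + 1) := by
      rw [pvert_mid (by omega) (by omega)]
      exact congrArg inr (Fin.ext (by simp))
    rcases Nat.lt_or_ge (i : ℕ) k with hik | hik
    · rw [hi]
      exact reach_pvert_up hn (by omega) (fun j hj => by
        simp only [Set.mem_setOf_eq]; omega)
    · rw [hi]
      exact ((reach_pvert_down hn (m := (i : ℕ) + 1) (by omega)
        (fun j h1 h2 => by simp only [Set.mem_setOf_eq]; omega)).trans hvu).symm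


lemma ncard_Iic (n : ℕ) : (Set.Iic n).ncard = n + 1 := by
  rw [← Finset.coe_Iic, Set.ncard_coe_finset, Nat.card_Iic]

lemma ncard_inter_compl {k : ℕ} (hk : k ≤ n) :
    (({m : ℕ | m ≠ k} : Set ℕ) ∩ Set.Iic n).ncard = n := by
  have : ({m : ℕ | m ≠ k} : Set ℕ) ∩ Set.Iic n = Set.Iic n \ {k} := by
    ext m
    simp only [Set.mem_inter_iff, Set.mem_setOf_eq, Set.mem_diff, Set.mem_Iic,
      Set.mem_singleton_iff]
    tauto
  rw [this, Set.ncard_diff_singleton_of_mem (Set.mem_Iic.2 hk), ncard_Iic]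
  omega

lemma card_sum_fin [Fintype V] : Fintype.card (V ⊕ Fin n) = Fintype.card V + n := by
  rw [Fintype.card_sum, Fintype.card_fin]

lemma lifted_isTree_full [Fintype V] (hn : 1 ≤ n) (hne : u ≠ v) (hT : T.IsTree)
    (he : s(u, v) ∈ T.edgeSet) : (lifted T u v n (Set.univ : Set ℕ)).IsTree := by
  refine aux_isTree_of_connected_card (lifted_connected_full hn hT.isConnected) ?_
  rw [lifted_ncard hn hne, card_sum_fin, Set.univ_inter, ncard_Iic,
    Set.ncard_diff_singleton_of_mem he]
  have h1 := aux_ncard_edge_of_isTree hT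
  have h2 : 1 ≤ T.edgeSet.ncard := by
    rw [Nat.one_le_iff_ne_zero, Ne, Set.ncard_eq_zero (Set.toFinite _),
      ← Set.not_nonempty_iff_eq_empty, not_not]
    exact ⟨_, he⟩
  omega

lemma lifted_isTree_missing [Fintype V] (hn : 1 ≤ n) (hne : u ≠ v) (hT : T.IsTree)
    (he : s(u, v) ∉ T.edgeSet) {k : ℕ} (hk : k ≤ n) :
    (lifted T u v n {m | m ≠ k}).IsTree := by
  refine aux_isTree_of_connected_card
    (lifted_connected_missing hn hT.isConnected he hk) ?_
  rw [lifted_ncard hn hne, card_sum_fin, ncard_inter_compl hk,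
    Set.diff_singleton_eq_self he]
  have h1 := aux_ncard_edge_of_isTree hT
  omega

lemma reconstruct {G : SimpleGraph V} {T' : SimpleGraph (V ⊕ Fin n)} (hn : 1 ≤ n)
    (hle : T' ≤ subdiv G u v n) :
    T' = lifted (T'.comap inl) u v n {m | pedge u v n m ∈ T'.edgeSet} := by
  have hsub : ∀ a b, T'.Adj a b → (lifted G u v n (Set.univ : Set ℕ)).Adj a b := by
    rw [← subdiv_eq]; exact fun a b h => hle h
  ext w₁ w₂
  rcases w₁ with a | i <;> rcases w₂ with b | j
  · rw [lifted_adj_inl_inl]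
    constructor
    · intro hadj
      exact ⟨hadj, (lifted_adj_inl_inl.1 (hsub _ _ hadj)).2⟩
    · exact fun h => h.1
  · rw [lifted_adj_inl_inr]
    constructor
    · intro hadj
      rcases lifted_adj_inl_inr.1 (hsub _ _ hadj) with ⟨ha, hi, -⟩ | ⟨ha, hi, -⟩
      · refine Or.inl ⟨ha, hi, ?_⟩
        show pedge u v n 0 ∈ T'.edgeSet
        rw [(pedge_eq_inl_inr hn (by omega)).2 (Or.inl ⟨rfl, ha, hi⟩)]
        exact T'.mem_edgeSet.2 hadj
      · refine Or.inr ⟨ha, hi, ?_⟩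
        show pedge u v n n ∈ T'.edgeSet
        rw [(pedge_eq_inl_inr hn le_rfl).2 (Or.inr ⟨rfl, ha, hi⟩)]
        exact T'.mem_edgeSet.2 hadj
    · rintro (⟨ha, hi, hmem⟩ | ⟨ha, hi, hmem⟩)
      · have heq : pedge u v n 0 = s(inl a, inr j) :=
          (pedge_eq_inl_inr hn (by omega)).2 (Or.inl ⟨rfl, ha, hi⟩)
        exact T'.mem_edgeSet.1 (heq ▸ hmem)
      · have heq : pedge u v n n = s(inl a, inr j) :=
          (pedge_eq_inl_inr hn le_rfl).2 (Or.inr ⟨rfl, ha, hi⟩)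
        exact T'.mem_edgeSet.1 (heq ▸ hmem)
  · rw [lifted_adj_inr_inl]
    rw [T'.adj_comm]
    constructor
    · intro hadj
      rcases lifted_adj_inl_inr.1 (hsub _ _ hadj) with ⟨ha, hi, -⟩ | ⟨ha, hi, -⟩
      · refine Or.inl ⟨ha, hi, ?_⟩
        show pedge u v n 0 ∈ T'.edgeSet
        rw [(pedge_eq_inl_inr hn (by omega)).2 (Or.inl ⟨rfl, ha, hi⟩)]
        exact T'.mem_edgeSet.2 hadj
      · refine Or.inr ⟨ha, hi, ?_⟩
        show pedge u v n n ∈ T'.edgeSet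
        rw [(pedge_eq_inl_inr hn le_rfl).2 (Or.inr ⟨rfl, ha, hi⟩)]
        exact T'.mem_edgeSet.2 hadj
    · rintro (⟨ha, hi, hmem⟩ | ⟨ha, hi, hmem⟩)
      · have heq : pedge u v n 0 = s(inl b, inr i) :=
          (pedge_eq_inl_inr hn (by omega)).2 (Or.inl ⟨rfl, ha, hi⟩)
        exact T'.mem_edgeSet.1 (heq ▸ hmem)
      · have heq : pedge u v n n = s(inl b, inr i) :=
          (pedge_eq_inl_inr hn le_rfl).2 (Or.inr ⟨rfl, ha, hi⟩)
        exact T'.mem_edgeSet.1 (heq ▸ hmem)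
  · rw [lifted_adj_inr_inr]
    constructor
    · intro hadj
      rcases lifted_adj_inr_inr.1 (hsub _ _ hadj) with ⟨hj, -⟩ | ⟨hi, -⟩
      · have e1 : 1 ≤ (j : ℕ) := by omega
        have e2 : (i : ℕ) = (j : ℕ) - 1 := by omega
        refine Or.inl ⟨hj, ?_⟩
        show pedge u v n (j : ℕ) ∈ T'.edgeSet
        rw [(pedge_eq_inr_inr hn j.isLt.le).2 ⟨⟨e1, j.isLt⟩, Or.inl ⟨e2, rfl⟩⟩]
        exact T'.mem_edgeSet.2 hadj
      · have e1 : 1 ≤ (i : ℕ) := by omega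
        have e2 : (j : ℕ) = (i : ℕ) - 1 := by omega
        refine Or.inr ⟨hi, ?_⟩
        show pedge u v n (i : ℕ) ∈ T'.edgeSet
        rw [(pedge_eq_inr_inr hn i.isLt.le).2 ⟨⟨e1, i.isLt⟩, Or.inr ⟨e2, rfl⟩⟩]
        exact T'.mem_edgeSet.2 hadj
    · rintro (⟨hj, hmem⟩ | ⟨hi, hmem⟩)
      · have e1 : 1 ≤ (j : ℕ) := by omega
        have e2 : (i : ℕ) = (j : ℕ) - 1 := by omega
        have heq : pedge u v n (j : ℕ) = s(inr i, inr j) :=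
          (pedge_eq_inr_inr hn j.isLt.le).2 ⟨⟨e1, j.isLt⟩, Or.inl ⟨e2, rfl⟩⟩
        exact T'.mem_edgeSet.1 (heq ▸ hmem)
      · have e1 : 1 ≤ (i : ℕ) := by omega
        have e2 : (j : ℕ) = (i : ℕ) - 1 := by omega
        have heq : pedge u v n (i : ℕ) = s(inr j, inr i) :=
          (pedge_eq_inr_inr hn i.isLt.le).2 ⟨⟨e1, i.isLt⟩, Or.inl ⟨e2, rfl⟩⟩
        exact (T'.adj_comm _ _).1 (T'.mem_edgeSet.1 (heq ▸ hmem))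

lemma no_two_missing {G : SimpleGraph V} {T' : SimpleGraph (V ⊕ Fin n)} (hn : 1 ≤ n)
    (hne : u ≠ v) (hle : T' ≤ subdiv G u v n) (hconn : T'.Connected) {k k' : ℕ}
    (hkk' : k < k') (hk' : k' ≤ n)
    (h1 : pedge u v n k ∉ T'.edgeSet) (h2 : pedge u v n k' ∉ T'.edgeSet) : False := by
  have hsub : ∀ a b, T'.Adj a b → (lifted G u v n (Set.univ : Set ℕ)).Adj a b := by
    rw [← subdiv_eq]; exact fun a b h => hle h
  set P : V ⊕ Fin n → Prop := fun w => ∃ m, k < m ∧ m ≤ k' ∧ w = pvert u v n m with hP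
  have hPinl : ∀ a : V, ¬ P (inl a) := by
    rintro a ⟨m, hm1, hm2, heq⟩
    rw [pvert_mid (by omega) (by omega)] at heq
    simp at heq
  have hPv : ∀ m, m ≤ n + 1 → (P (pvert u v n m) ↔ (k < m ∧ m ≤ k')) := by
    intro m hm
    constructor
    · rintro ⟨m', hm1, hm2, heq⟩
      have := pvert_inj hne hm (by omega) heq
      omega
    · intro h; exact ⟨m, h.1, h.2, rfl⟩
  have hPinr : ∀ i : Fin n, (P (inr i) ↔ (k < (i : ℕ) + 1 ∧ (i : ℕ) + 1 ≤ k')) := by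
    intro i
    have hi : (inr i : V ⊕ Fin n) = pvert u v n ((i : ℕ) + 1) := by
      rw [pvert_mid (by omega) (by omega)]
      exact congrArg inr (Fin.ext (by simp))
    rw [hi]
    exact hPv _ (by omega)
  have hinv : ∀ w₁ w₂, T'.Adj w₁ w₂ → (P w₁ ↔ P w₂) := by
    intro w₁ w₂ hadj
    rcases w₁ with a | i <;> rcases w₂ with b | j
    · exact iff_of_false (hPinl a) (hPinl b)
    · rcases lifted_adj_inl_inr.1 (hsub _ _ hadj) with ⟨ha, hj, -⟩ | ⟨ha, hj, -⟩
      · have hmem : pedge u v n 0 ∈ T'.edgeSet := by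
          rw [(pedge_eq_inl_inr hn (by omega)).2 (Or.inl ⟨rfl, ha, hj⟩)]
          exact T'.mem_edgeSet.2 hadj
        have hk0 : k ≠ 0 := fun hf => h1 (hf ▸ hmem)
        exact iff_of_false (hPinl a) (fun hp => by rw [hPinr] at hp; omega)
      · have hmem : pedge u v n n ∈ T'.edgeSet := by
          rw [(pedge_eq_inl_inr hn le_rfl).2 (Or.inr ⟨rfl, ha, hj⟩)]
          exact T'.mem_edgeSet.2 hadj
        have hkn : k' ≠ n := fun hf => h2 (hf ▸ hmem)
        exact iff_of_false (hPinl a) (fun hp => by rw [hPinr] at hp; omega)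
    · rcases lifted_adj_inr_inl.1 (hsub _ _ hadj) with ⟨ha, hi, -⟩ | ⟨ha, hi, -⟩
      · have hmem : pedge u v n 0 ∈ T'.edgeSet := by
          rw [(pedge_eq_inl_inr hn (by omega)).2 (Or.inl ⟨rfl, ha, hi⟩)]
          exact T'.mem_edgeSet.1 ((Sym2.eq_swap (a := inl b)).symm ▸ T'.mem_edgeSet.2 hadj)
        have hk0 : k ≠ 0 := fun hf => h1 (hf ▸ hmem)
        exact iff_of_false (fun hp => by rw [hPinr] at hp; omega) (hPinl b)
      · have hmem : pedge u v n n ∈ T'.edgeSet := by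
          rw [(pedge_eq_inl_inr hn le_rfl).2 (Or.inr ⟨rfl, ha, hi⟩)]
          exact T'.mem_edgeSet.1 ((Sym2.eq_swap (a := inl b)).symm ▸ T'.mem_edgeSet.2 hadj)
        have hkn : k' ≠ n := fun hf => h2 (hf ▸ hmem)
        exact iff_of_false (fun hp => by rw [hPinr] at hp; omega) (hPinl b)
    · rcases lifted_adj_inr_inr.1 (hsub _ _ hadj) with ⟨hj, -⟩ | ⟨hi, -⟩
      · have e1 : 1 ≤ (j : ℕ) := by omega
        have e2 : (i : ℕ) = (j : ℕ) - 1 := by omega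
        have hmem : pedge u v n (j : ℕ) ∈ T'.edgeSet := by
          rw [(pedge_eq_inr_inr hn j.isLt.le).2 ⟨⟨e1, j.isLt⟩, Or.inl ⟨e2, rfl⟩⟩]
          exact T'.mem_edgeSet.2 hadj
        have ha1 : (j : ℕ) ≠ k := fun hf => h1 (hf ▸ hmem)
        have ha2 : (j : ℕ) ≠ k' := fun hf => h2 (hf ▸ hmem)
        rw [hPinr, hPinr]
        omega
      · have e1 : 1 ≤ (i : ℕ) := by omega
        have e2 : (j : ℕ) = (i : ℕ) - 1 := by omega
        have hmem : pedge u v n (i : ℕ) ∈ T'.edgeSet := by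
          rw [(pedge_eq_inr_inr hn i.isLt.le).2 ⟨⟨e1, i.isLt⟩, Or.inr ⟨e2, rfl⟩⟩]
          exact T'.mem_edgeSet.2 hadj
        have ha1 : (i : ℕ) ≠ k := fun hf => h1 (hf ▸ hmem)
        have ha2 : (i : ℕ) ≠ k' := fun hf => h2 (hf ▸ hmem)
        rw [hPinr, hPinr]
        omega
  have hstart : P (pvert u v n (k + 1)) := (hPv (k + 1) (by omega)).2 ⟨by omega, by omega⟩
  have hend : P (inl u) := by
    have := aux_invariant P hinv (hconn.preconnected (pvert u v n (k + 1)) (inl u)) hstart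
    exact this
  exact hPinl u hend

lemma lifted_inj {T₁ T₂ : SimpleGraph V} {K : Set ℕ}
    (heq : lifted T₁ u v n K = lifted T₂ u v n K)
    (he : s(u, v) ∈ T₁.edgeSet ↔ s(u, v) ∈ T₂.edgeSet) : T₁ = T₂ := by
  ext a b
  by_cases hs : s(a, b) = s(u, v)
  · rw [Sym2.eq_iff] at hs
    rcases hs with ⟨rfl, rfl⟩ | ⟨rfl, rfl⟩
    · exact ⟨fun h => T₂.mem_edgeSet.1 (he.1 (T₁.mem_edgeSet.2 h)),
        fun h => T₁.mem_edgeSet.1 (he.2 (T₂.mem_edgeSet.2 h))⟩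
    · rw [T₁.adj_comm, T₂.adj_comm]
      exact ⟨fun h => T₂.mem_edgeSet.1 (he.1 (T₁.mem_edgeSet.2 h)),
        fun h => T₁.mem_edgeSet.1 (he.2 (T₂.mem_edgeSet.2 h))⟩
  · have h1 : (lifted T₁ u v n K).Adj (inl a) (inl b)
        ↔ (lifted T₂ u v n K).Adj (inl a) (inl b) := by rw [heq]
    rw [lifted_adj_inl_inl, lifted_adj_inl_inl] at h1
    exact ⟨fun h => (h1.1 ⟨h, hs⟩).1, fun h => (h1.2 ⟨h, hs⟩).1⟩

lemma surj_full [Fintype V] {G : SimpleGraph V} {T' : SimpleGraph (V ⊕ Fin n)}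
    (hn : 1 ≤ n) (he : G.Adj u v)
    (hle : T' ≤ subdiv G u v n) (hT : T'.IsTree)
    (hall : ∀ m, m ≤ n → pedge u v n m ∈ T'.edgeSet) :
    ∃ T : SimpleGraph V, (T ≤ G ∧ T.IsTree) ∧ s(u, v) ∈ T.edgeSet ∧
      lifted T u v n Set.univ = T' := by
  have hne : u ≠ v := he.ne
  set B := T'.comap inl with hBdef
  have hB : ∀ a b, B.Adj a b → G.Adj a b ∧ s(a, b) ≠ s(u, v) := by
    intro a b h
    have h2 := hle h
    rw [subdiv_eq] at h2
    exact lifted_adj_inl_inl.1 h2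
  set T₀ := B ⊔ SimpleGraph.fromEdgeSet {s(u, v)} with hT₀def
  have hfrom_le : SimpleGraph.fromEdgeSet {s(u, v)} ≤ G := by
    intro a b hab
    rw [SimpleGraph.fromEdgeSet_adj] at hab
    rcases Sym2.eq_iff.1 (Set.mem_singleton_iff.1 hab.1) with ⟨rfl, rfl⟩ | ⟨rfl, rfl⟩
    · exact he
    · exact he.symm
  have hT₀G : T₀ ≤ G := sup_le (fun a b h => (hB a b h).1) hfrom_le
  have hT₀uv : T₀.Adj u v :=
    (SimpleGraph.sup_adj _ _ u v).2 (Or.inr ((SimpleGraph.fromEdgeSet_adj _).2 ⟨rfl, hne⟩))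
  have hT₀e : s(u, v) ∈ T₀.edgeSet := T₀.mem_edgeSet.2 hT₀uv
  have hrec : T' = lifted B u v n {m | pedge u v n m ∈ T'.edgeSet} := reconstruct hn hle
  have hcong : lifted T₀ u v n Set.univ = lifted B u v n {m | pedge u v n m ∈ T'.edgeSet} := by
    refine lifted_congr (fun a b => ?_) (fun m hm => ?_)
    · constructor
      · rintro ⟨h, hs⟩
        rcases (SimpleGraph.sup_adj _ _ _ _).1 h with h' | h'
        · exact ⟨h', hs⟩
        · exfalso
          exact hs (Set.mem_singleton_iff.1 ((SimpleGraph.fromEdgeSet_adj _).1 h').1)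
      · rintro ⟨h, hs⟩
        exact ⟨(SimpleGraph.sup_adj _ _ _ _).2 (Or.inl h), hs⟩
    · exact ⟨fun _ => hall m hm, fun _ => Set.mem_univ m⟩
  have hlift : lifted T₀ u v n Set.univ = T' := hcong.trans hrec.symm
  have hBe : s(u, v) ∉ B.edgeSet := fun h => (hB u v (B.mem_edgeSet.1 h)).2 rfl
  -- connectivity of T₀
  set π : V ⊕ Fin n → V := Sum.elim id (fun _ => u) with hπ
  have hproj : ∀ w₁ w₂, T'.Adj w₁ w₂ → T₀.Reachable (π w₁) (π w₂) := by
    intro w₁ w₂ hadj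
    rw [hrec] at hadj
    rcases w₁ with a | i <;> rcases w₂ with b | j
    · exact ((le_sup_left : B ≤ T₀) (lifted_adj_inl_inl.1 hadj).1).reachable
    · rcases lifted_adj_inl_inr.1 hadj with ⟨rfl, -, -⟩ | ⟨rfl, -, -⟩
      · exact SimpleGraph.Reachable.refl _
      · exact hT₀uv.symm.reachable
    · rcases lifted_adj_inr_inl.1 hadj with ⟨rfl, -, -⟩ | ⟨rfl, -, -⟩
      · exact SimpleGraph.Reachable.refl _
      · exact hT₀uv.reachable
    · exact SimpleGraph.Reachable.refl _
  have hconn₀ : T₀.Connected := by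
    rw [SimpleGraph.connected_iff]
    refine ⟨fun a b => ?_, ⟨u⟩⟩
    simpa [hπ] using aux_reachable_map π hproj (hT.isConnected.preconnected (inl a) (inl b))
  -- cardinality
  have hcardT' := aux_ncard_edge_of_isTree hT
  rw [card_sum_fin] at hcardT'
  have hKI : ({m | pedge u v n m ∈ T'.edgeSet} : Set ℕ) ∩ Set.Iic n = Set.Iic n :=
    Set.inter_eq_right.mpr (fun m hm => hall m (Set.mem_Iic.1 hm))
  have hcard1 : T'.edgeSet.ncard = B.edgeSet.ncard + (n + 1) := by
    rw [hrec, lifted_ncard hn hne, Set.diff_singleton_eq_self hBe, hKI, ncard_Iic]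
  have hfromEdge : (SimpleGraph.fromEdgeSet {s(u, v)}).edgeSet = {s(u, v)} := by
    rw [SimpleGraph.edgeSet_fromEdgeSet]
    ext ed
    simp only [Set.mem_diff, Set.mem_singleton_iff, Set.mem_setOf_eq]
    constructor
    · exact fun h => h.1
    · rintro rfl
      exact ⟨rfl, fun hdiag => hne (Sym2.mk_isDiag_iff.1 hdiag)⟩
  have hT₀edges : T₀.edgeSet = insert (s(u, v)) B.edgeSet := by
    rw [hT₀def, SimpleGraph.edgeSet_sup, hfromEdge, Set.union_singleton]
  have hcard0 : T₀.edgeSet.ncard = B.edgeSet.ncard + 1 := by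
    rw [hT₀edges, Set.ncard_insert_of_notMem hBe (Set.toFinite _)]
  have hTree₀ : T₀.IsTree := aux_isTree_of_connected_card hconn₀ (by omega)
  exact ⟨T₀, ⟨hT₀G, hTree₀⟩, hT₀e, hlift⟩

lemma surj_missing [Fintype V] {G : SimpleGraph V} {T' : SimpleGraph (V ⊕ Fin n)}
    (hn : 1 ≤ n) (hne : u ≠ v)
    (hle : T' ≤ subdiv G u v n) (hT : T'.IsTree) {k : ℕ} (hk : k ≤ n)
    (hmiss : pedge u v n k ∉ T'.edgeSet)
    (hall : ∀ m, m ≤ n → m ≠ k → pedge u v n m ∈ T'.edgeSet) :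
    ∃ T : SimpleGraph V, (T ≤ G ∧ T.IsTree) ∧ s(u, v) ∉ T.edgeSet ∧
      lifted T u v n {m | m ≠ k} = T' := by
  set B := T'.comap inl with hBdef
  have hB : ∀ a b, B.Adj a b → G.Adj a b ∧ s(a, b) ≠ s(u, v) := by
    intro a b h
    have h2 := hle h
    rw [subdiv_eq] at h2
    exact lifted_adj_inl_inl.1 h2
  have hBG : B ≤ G := fun a b h => (hB a b h).1
  have hBe : s(u, v) ∉ B.edgeSet := fun h => (hB u v (B.mem_edgeSet.1 h)).2 rfl
  have hrec : T' = lifted B u v n {m | pedge u v n m ∈ T'.edgeSet} := reconstruct hn hle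
  have hcong : lifted B u v n {m | m ≠ k}
      = lifted B u v n {m | pedge u v n m ∈ T'.edgeSet} := by
    refine lifted_congr (fun a b => Iff.rfl) (fun m hm => ?_)
    constructor
    · exact fun hmk => hall m hm hmk
    · intro hmem
      intro hf
      exact hmiss (hf ▸ hmem)
  have hlift : lifted B u v n {m | m ≠ k} = T' := hcong.trans hrec.symm
  set π : V ⊕ Fin n → V := Sum.elim id (fun i => if (i : ℕ) + 1 ≤ k then u else v) with hπ
  have hproj : ∀ w₁ w₂, T'.Adj w₁ w₂ → B.Reachable (π w₁) (π w₂) := by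
    intro w₁ w₂ hadj
    rw [hrec] at hadj
    rcases w₁ with a | i <;> rcases w₂ with b | j
    · exact ((lifted_adj_inl_inl.1 hadj).1).reachable
    · rcases lifted_adj_inl_inr.1 hadj with ⟨ha, hj, hK⟩ | ⟨ha, hj, hK⟩
      · have hk0 : k ≠ 0 := fun hf => hmiss (hf ▸ hK)
        have hπj : π (inr j) = u := by
          simp only [hπ, Sum.elim_inr, hj]
          rw [if_pos (by omega)]
        have hπa : π (inl a) = u := by simp [hπ, ha]
        rw [hπj, hπa]
      · have hkn : k ≠ n := fun hf => hmiss (hf ▸ hK)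
        have hπj : π (inr j) = v := by
          simp only [hπ, Sum.elim_inr, hj]
          rw [if_neg (by omega)]
        have hπa : π (inl a) = v := by simp [hπ, ha]
        rw [hπj, hπa]
    · rcases lifted_adj_inr_inl.1 hadj with ⟨ha, hi, hK⟩ | ⟨ha, hi, hK⟩
      · have hk0 : k ≠ 0 := fun hf => hmiss (hf ▸ hK)
        have hπi : π (inr i) = u := by
          simp only [hπ, Sum.elim_inr, hi]
          rw [if_pos (by omega)]
        have hπa : π (inl b) = u := by simp [hπ, ha]
        rw [hπi, hπa]
      · have hkn : k ≠ n := fun hf => hmiss (hf ▸ hK)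
        have hπi : π (inr i) = v := by
          simp only [hπ, Sum.elim_inr, hi]
          rw [if_neg (by omega)]
        have hπa : π (inl b) = v := by simp [hπ, ha]
        rw [hπi, hπa]
    · rcases lifted_adj_inr_inr.1 hadj with ⟨hj, hK⟩ | ⟨hi, hK⟩
      · have hjk : (j : ℕ) ≠ k := fun hf => hmiss (hf ▸ hK)
        have : π (inr i) = π (inr j) := by
          simp only [hπ, Sum.elim_inr]
          by_cases hc : (i : ℕ) + 1 ≤ k
          · rw [if_pos hc, if_pos (by omega)]
          · rw [if_neg hc, if_neg (by omega)]
        rw [this]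
      · have hik : (i : ℕ) ≠ k := fun hf => hmiss (hf ▸ hK)
        have : π (inr i) = π (inr j) := by
          simp only [hπ, Sum.elim_inr]
          by_cases hc : (j : ℕ) + 1 ≤ k
          · rw [if_pos (by omega), if_pos hc]
          · rw [if_neg (by omega), if_neg hc]
        rw [this]
  have hconnB : B.Connected := by
    rw [SimpleGraph.connected_iff]
    refine ⟨fun a b => ?_, ⟨u⟩⟩
    simpa [hπ] using aux_reachable_map π hproj (hT.isConnected.preconnected (inl a) (inl b))
  have hcardT' := aux_ncard_edge_of_isTree hT
  rw [card_sum_fin] at hcardT'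
  have hKI : ({m | pedge u v n m ∈ T'.edgeSet} : Set ℕ) ∩ Set.Iic n = Set.Iic n \ {k} := by
    ext m
    simp only [Set.mem_inter_iff, Set.mem_setOf_eq, Set.mem_diff, Set.mem_Iic,
      Set.mem_singleton_iff]
    constructor
    · rintro ⟨hmem, hm⟩
      exact ⟨hm, fun hf => hmiss (hf ▸ hmem)⟩
    · rintro ⟨hm, hmk⟩
      exact ⟨hall m hm hmk, hm⟩
  have hcard1 : T'.edgeSet.ncard = B.edgeSet.ncard + n := by
    rw [hrec, lifted_ncard hn hne, Set.diff_singleton_eq_self hBe, hKI,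
      Set.ncard_diff_singleton_of_mem (Set.mem_Iic.2 hk), ncard_Iic]
    omega
  have hTreeB : B.IsTree := aux_isTree_of_connected_card hconnB (by omega)
  exact ⟨B, ⟨hBG, hTreeB⟩, hBe, hlift⟩


lemma posCount_lift_full [Fintype V] (hn : 1 ≤ n) (hne : u ≠ v) (σ : Sym2 V → ℤ)
    (hσe : σ s(u, v) = 1) (he : s(u, v) ∈ T.edgeSet) :
    posCount (subdivSign σ) (lifted T u v n Set.univ) = posCount σ T + n := by
  rw [posCount_lifted hn hne σ, Set.univ_inter, ncard_Iic]
  have hset : {ed | ed ∈ T.edgeSet \ {s(u, v)} ∧ σ ed = 1}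
      = {ed | ed ∈ T.edgeSet ∧ σ ed = 1} \ {s(u, v)} := by
    ext ed
    simp only [Set.mem_setOf_eq, Set.mem_diff, Set.mem_singleton_iff]
    constructor
    · rintro ⟨⟨h1, h2⟩, h3⟩; exact ⟨⟨h1, h3⟩, h2⟩
    · rintro ⟨⟨h1, h3⟩, h2⟩; exact ⟨⟨h1, h2⟩, h3⟩
  have hmem : s(u, v) ∈ {ed | ed ∈ T.edgeSet ∧ σ ed = 1} := ⟨he, hσe⟩
  have hpos : 1 ≤ {ed | ed ∈ T.edgeSet ∧ σ ed = 1}.ncard := by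
    rw [Nat.one_le_iff_ne_zero, Ne, Set.ncard_eq_zero (Set.toFinite _),
      ← Set.not_nonempty_iff_eq_empty, not_not]
    exact ⟨_, hmem⟩
  rw [hset, Set.ncard_diff_singleton_of_mem hmem, posCount]
  omega

lemma posCount_lift_missing [Fintype V] (hn : 1 ≤ n) (hne : u ≠ v) (σ : Sym2 V → ℤ)
    (he : s(u, v) ∉ T.edgeSet) {k : ℕ} (hk : k ≤ n) :
    posCount (subdivSign σ) (lifted T u v n {m | m ≠ k}) = posCount σ T + n := by
  rw [posCount_lifted hn hne σ, ncard_inter_compl hk, Set.diff_singleton_eq_self he, posCount]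

lemma finsum_mem_const_mul {α : Type*} {s : Set α} (hs : s.Finite) (c : ℤ) (g : α → ℤ) :
    ∑ᶠ i ∈ s, c * g i = c * ∑ᶠ i ∈ s, g i := by
  rw [finsum_mem_eq_finite_toFinset_sum _ hs, finsum_mem_eq_finite_toFinset_sum _ hs,
    Finset.mul_sum]

end Subdiv


/-- If `x` (the sum of `(-1)^{v(T)}` over spanning trees of `G` containing
`e`) and `y` (the corresponding sum over spanning trees not containing `e`)
satisfy `|x + y| = |x| + |y|`, then the absolute value of the sum of
`(-1)^{v(T')}` over all spanning trees `T'` of `G^n` equals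
`|x| + (n+1) * |y|`. -/
theorem abs_subdiv_signed_tree_sum {V : Type*} [Fintype V] (G : SimpleGraph V)
    (hG : G.Connected) (σ : Sym2 V → ℤ)
    (hσ : ∀ ed ∈ G.edgeSet, σ ed = 1 ∨ σ ed = -1)
    (u v : V) (he : G.Adj u v) (hsign : σ s(u, v) = 1)
    (n : ℕ) (hn : 1 ≤ n) (x y : ℤ)
    (hx : x = ∑ᶠ T ∈ {T ∈ spanningTrees G | s(u, v) ∈ T.edgeSet},
        (-1 : ℤ) ^ posCount σ T)
    (hy : y = ∑ᶠ T ∈ {T ∈ spanningTrees G | s(u, v) ∉ T.edgeSet},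
        (-1 : ℤ) ^ posCount σ T)
    (hxy : |x + y| = |x| + |y|) :
    |∑ᶠ T' ∈ spanningTrees (subdiv G u v n),
        (-1 : ℤ) ^ posCount (subdivSign σ) T'| =
      |x| + ((n : ℤ) + 1) * |y| := by
  classical
  have hne : u ≠ v := he.ne
  set f' : SimpleGraph (V ⊕ Fin n) → ℤ :=
    fun T' => (-1 : ℤ) ^ posCount (subdivSign σ) T' with hf'
  set A' : Set (SimpleGraph (V ⊕ Fin n)) :=
    {T' ∈ spanningTrees (subdiv G u v n) | ∀ m, m ≤ n → pedge u v n m ∈ T'.edgeSet} with hA'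
  set B' : Fin (n + 1) → Set (SimpleGraph (V ⊕ Fin n)) :=
    fun k => {T' ∈ spanningTrees (subdiv G u v n) | pedge u v n (k : ℕ) ∉ T'.edgeSet} with hB'
  have hSplit : spanningTrees (subdiv G u v n) = A' ∪ ⋃ k : Fin (n + 1), B' k := by
    ext T'
    constructor
    · intro hT'
      by_cases hall : ∀ m, m ≤ n → pedge u v n m ∈ T'.edgeSet
      · exact Or.inl ⟨hT', hall⟩
      · push_neg at hall
        obtain ⟨m, hm, hmiss⟩ := hall
        exact Or.inr (Set.mem_iUnion.2 ⟨⟨m, by omega⟩, hT', hmiss⟩)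
    · rintro (h | h)
      · exact h.1
      · obtain ⟨k, hk, -⟩ := Set.mem_iUnion.1 h
        exact hk
  have hdisj1 : Disjoint A' (⋃ k : Fin (n + 1), B' k) := by
    rw [Set.disjoint_left]
    rintro T' ⟨hT', hall⟩ hun
    obtain ⟨k, -, hmiss⟩ := Set.mem_iUnion.1 hun
    exact hmiss (hall (k : ℕ) (by omega))
  have hdisj2 : Pairwise (Function.onFun Disjoint B') := by
    intro k k' hkk'
    have hkv : (k : ℕ) ≠ (k' : ℕ) := fun hf => hkk' (Fin.ext hf)
    simp only [Function.onFun]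
    rw [Set.disjoint_left]
    rintro T' ⟨hT', h1⟩ ⟨-, h2⟩
    rcases Nat.lt_or_ge (k : ℕ) (k' : ℕ) with h | h
    · exact no_two_missing hn hne hT'.1 hT'.2.isConnected h (by omega) h1 h2
    · exact no_two_missing hn hne hT'.1 hT'.2.isConnected
        (lt_of_le_of_ne h (Ne.symm hkv)) (by omega) h2 h1
  have hbijA : Set.BijOn (fun T => lifted T u v n Set.univ)
      {T ∈ spanningTrees G | s(u, v) ∈ T.edgeSet} A' := by
    refine ⟨?_, ?_, ?_⟩
    · rintro T ⟨⟨hTG, hTree⟩, hTe⟩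
      refine ⟨⟨?_, lifted_isTree_full hn hne hTree hTe⟩, ?_⟩
      · rw [subdiv_eq]
        exact lifted_mono hTG (fun _ _ _ => Set.mem_univ _)
      · intro m hm
        exact (pedge_mem_lifted_iff hn hne hm).2 (Set.mem_univ m)
    · rintro T₁ ⟨-, h1⟩ T₂ ⟨-, h2⟩ heq
      exact lifted_inj heq (iff_of_true h1 h2)
    · rintro T' ⟨⟨hle, hTree⟩, hall⟩
      obtain ⟨T, hT1, hT2, hT3⟩ := surj_full hn he hle hTree hall
      exact ⟨T, ⟨hT1, hT2⟩, hT3⟩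
  have hbijB : ∀ k : Fin (n + 1), Set.BijOn (fun T => lifted T u v n {m | m ≠ (k : ℕ)})
      {T ∈ spanningTrees G | s(u, v) ∉ T.edgeSet} (B' k) := by
    intro k
    have hk : (k : ℕ) ≤ n := by omega
    refine ⟨?_, ?_, ?_⟩
    · rintro T ⟨⟨hTG, hTree⟩, hTe⟩
      refine ⟨⟨?_, lifted_isTree_missing hn hne hTree hTe hk⟩, ?_⟩
      · rw [subdiv_eq]
        exact lifted_mono hTG (fun _ _ _ => Set.mem_univ _)
      · rw [pedge_mem_lifted_iff hn hne hk]
        exact fun hf => hf rfl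
    · rintro T₁ ⟨-, h1⟩ T₂ ⟨-, h2⟩ heq
      exact lifted_inj heq (iff_of_false h1 h2)
    · rintro T' ⟨⟨hle, hTree⟩, hmiss⟩
      have hall : ∀ m, m ≤ n → m ≠ (k : ℕ) → pedge u v n m ∈ T'.edgeSet := by
        intro m hm hmk
        by_contra hcon
        rcases Nat.lt_or_ge m (k : ℕ) with h | h
        · exact no_two_missing hn hne hle hTree.isConnected h hk hcon hmiss
        · exact no_two_missing hn hne hle hTree.isConnected
            (lt_of_le_of_ne h (Ne.symm hmk)) hm hmiss hcon
      obtain ⟨T, hT1, hT2, hT3⟩ := surj_missing hn hne hle hTree hk hmiss hall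
      exact ⟨T, ⟨hT1, hT2⟩, hT3⟩
  have hsumA : ∑ᶠ T' ∈ A', f' T' = (-1 : ℤ) ^ n * x := by
    rw [← finsum_mem_eq_of_bijOn _ hbijA (fun T _ => rfl)]
    have : ∀ T ∈ {T ∈ spanningTrees G | s(u, v) ∈ T.edgeSet},
        f' (lifted T u v n Set.univ) = (-1 : ℤ) ^ n * ((-1 : ℤ) ^ posCount σ T) := by
      rintro T ⟨-, hTe⟩
      rw [hf']
      simp only []
      rw [posCount_lift_full hn hne σ hsign hTe, pow_add, mul_comm]
    rw [finsum_mem_congr rfl this, finsum_mem_const_mul (Set.toFinite _), ← hx]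
  have hsumB : ∀ k : Fin (n + 1), ∑ᶠ T' ∈ B' k, f' T' = (-1 : ℤ) ^ n * y := by
    intro k
    have hk : (k : ℕ) ≤ n := by omega
    rw [← finsum_mem_eq_of_bijOn _ (hbijB k) (fun T _ => rfl)]
    have : ∀ T ∈ {T ∈ spanningTrees G | s(u, v) ∉ T.edgeSet},
        f' (lifted T u v n {m | m ≠ (k : ℕ)})
          = (-1 : ℤ) ^ n * ((-1 : ℤ) ^ posCount σ T) := by
      rintro T ⟨-, hTe⟩
      rw [hf']
      simp only []
      rw [posCount_lift_missing hn hne σ hTe hk, pow_add, mul_comm]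
    rw [finsum_mem_congr rfl this, finsum_mem_const_mul (Set.toFinite _), ← hy]
  have htotal : ∑ᶠ T' ∈ spanningTrees (subdiv G u v n), f' T'
      = (-1 : ℤ) ^ n * (x + ((n : ℤ) + 1) * y) := by
    rw [hSplit, finsum_mem_union hdisj1 (Set.toFinite _) (Set.toFinite _),
      finsum_mem_iUnion hdisj2 (fun k => Set.toFinite _), hsumA]
    rw [finsum_congr hsumB, finsum_eq_sum_of_fintype, Finset.sum_const, Finset.card_univ,
      Fintype.card_fin, nsmul_eq_mul]
    push_cast
    ring
  rw [htotal, abs_mul, abs_pow, abs_neg, abs_one, one_pow, one_mul]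
  have hor : (0 ≤ x ∧ 0 ≤ y) ∨ (x ≤ 0 ∧ y ≤ 0) := by
    rcases abs_cases (x + y) with ⟨h1, h2⟩ | ⟨h1, h2⟩ <;>
      rcases abs_cases x with ⟨h3, h4⟩ | ⟨h3, h4⟩ <;>
      rcases abs_cases y with ⟨h5, h6⟩ | ⟨h5, h6⟩ <;>
      rw [h1, h3, h5] at hxy <;> omega
  have hn0 : (0 : ℤ) ≤ (n : ℤ) + 1 := by positivity
  rcases hor with ⟨hx0, hy0⟩ | ⟨hx0, hy0⟩
  · rw [abs_of_nonneg hx0, abs_of_nonneg hy0, abs_of_nonneg (by nlinarith)]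
  · rw [abs_of_nonpos hx0, abs_of_nonpos hy0, abs_of_nonpos (by nlinarith)]
    ring
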